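/- Let ρ be a positive semidefinite operator with 0 < tr ρ ≤ 1 on a finite-dimensional Hilbert space and Π a projector. Then the purified distance satisfies P(ρ, ΠρΠ) ≤ √(2 tr(Π^⊥ ρ) − (tr(Π^⊥ ρ))²), where Π^⊥ = 1 − Π. -/

import Mathlib

open Matrix Kronecker ComplexOrder

noncomputable section

/-- Apply a real function to the eigenvalues of a Hermitian matrix. -/
def hermCFC {n : Type*} [Fintype n] [DecidableEq n] (f : ℝ → ℝ)
    (M : Matrix n n ℂ) : Matrix n n ℂ :=
  if h : M.IsHermitian then h.cfc f else 0

/-- The operator absolute value `|M| = √(Mᴴ M)`. -/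
def matAbs {n : Type*} [Fintype n] [DecidableEq n] (M : Matrix n n ℂ) :
    Matrix n n ℂ :=
  (Matrix.posSemidef_conjTranspose_mul_self M).1.eigenvectorUnitary.1 *
    diagonal ((↑) ∘ Real.sqrt ∘ (Matrix.posSemidef_conjTranspose_mul_self M).1.eigenvalues) *
    (star (Matrix.posSemidef_conjTranspose_mul_self M).1.eigenvectorUnitary : Matrix n n ℂ)

/-- The trace norm `‖M‖₁ = tr |M|`. -/
def traceNorm {n : Type*} [Fintype n] [DecidableEq n] (M : Matrix n n ℂ) : ℝ :=
  (matAbs M).trace.re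

/-- Matrix square root via eigenvalues. -/
def matSqrt {n : Type*} [Fintype n] [DecidableEq n] (M : Matrix n n ℂ) :
    Matrix n n ℂ :=
  hermCFC Real.sqrt M

/-- Generalized fidelity `F̄(ρ,τ) = tr|√ρ√τ| + √((1−tr ρ)(1−tr τ))` for
subnormalized states. -/
def genFid {n : Type*} [Fintype n] [DecidableEq n] (ρ τ : Matrix n n ℂ) : ℝ :=
  traceNorm (matSqrt ρ * matSqrt τ) +
    Real.sqrt ((1 - ρ.trace.re) * (1 - τ.trace.re))

/-- Purified distance `P(ρ,τ) = √(1 − F̄(ρ,τ)²)`. -/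
def purifiedDist {n : Type*} [Fintype n] [DecidableEq n]
    (ρ τ : Matrix n n ℂ) : ℝ :=
  Real.sqrt (1 - genFid ρ τ ^ 2)

open scoped MatrixOrder

lemma matSqrt_eq_sqrt {n : Type*} [Fintype n] [DecidableEq n] {A : Matrix n n ℂ}
    (hA : A.PosSemidef) : matSqrt A = CFC.sqrt A := by
  rw [matSqrt, hermCFC, dif_pos hA.1, ← hA.1.cfc_eq, CFC.sqrt_eq_cfc,
    cfc_nnreal_eq_real _ A hA.nonneg]
  congr 1
  funext x
  rw [Real.sqrt]

lemma matAbs_eq_matSqrt {n : Type*} [Fintype n] [DecidableEq n] (M : Matrix n n ℂ) :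
    matAbs M = matSqrt (Mᴴ * M) := by
  rw [matAbs, matSqrt, hermCFC, dif_pos (posSemidef_conjTranspose_mul_self M).1,
    IsHermitian.cfc, Unitary.conjStarAlgAut_apply]
  rfl

lemma trace_re_nonneg' {n : Type*} [Fintype n] [DecidableEq n] {A : Matrix n n ℂ}
    (hA : A.PosSemidef) : 0 ≤ A.trace.re := by
  rw [Matrix.trace, Complex.re_sum]
  refine Finset.sum_nonneg fun i _ => ?_
  have := hA.re_dotProduct_nonneg (Pi.single i 1)
  simpa [dotProduct, mulVec, Pi.single_apply, Finset.sum_ite_eq] using this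


/-- The purified distance between a subnormalized state `ρ` and the projected
state `ΠρΠ` is at most `√(2 tr(Π^⊥ρ) − (tr(Π^⊥ρ))²)`, where `Π^⊥ = 1 − Π`. -/
theorem purifiedDist_projection_bound {d : ℕ} (ρ Pj : Matrix (Fin d) (Fin d) ℂ)
    (hρ : ρ.PosSemidef) (hρtr : 0 < ρ.trace.re) (hρtr1 : ρ.trace.re ≤ 1)
    (hPj : Pj.IsHermitian) (hPj2 : Pj * Pj = Pj) :
    purifiedDist ρ (Pj * ρ * Pj) ≤
      Real.sqrt (2 * (((1 - Pj) * ρ).trace.re) - (((1 - Pj) * ρ).trace.re) ^ 2) := by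
  set τ : Matrix (Fin d) (Fin d) ℂ := Pj * ρ * Pj with hτdef
  have hτ : τ.PosSemidef := by
    have := hρ.mul_mul_conjTranspose_same Pj
    rwa [hPj.eq] at this
  set t : ℝ := ρ.trace.re with htdef
  set ε : ℝ := ((1 - Pj) * ρ).trace.re with hεdef
  -- trace identities
  have htrτ : τ.trace = (Pj * ρ).trace := by
    rw [hτdef, trace_mul_cycle, hPj2]
  have htrsub : ((1 - Pj) * ρ).trace = ρ.trace - (Pj * ρ).trace := by
    rw [Matrix.sub_mul, Matrix.one_mul, trace_sub]
  have hτtr_re : τ.trace.re = t - ε := by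
    rw [htrτ, hεdef, htrsub, Complex.sub_re, htdef]; ring
  -- ε bounds
  have hε_nonneg : 0 ≤ ε := by
    have hP' : ((1 - Pj) * ρ * (1 - Pj)).PosSemidef := by
      have := hρ.mul_mul_conjTranspose_same (1 - Pj)
      rwa [conjTranspose_sub, conjTranspose_one, hPj.eq] at this
    have h1 : ((1 - Pj) * ρ * (1 - Pj)).trace = ((1 - Pj) * ρ).trace := by
      have hQ2 : (1 - Pj) * (1 - Pj) = 1 - Pj := by
        rw [Matrix.sub_mul, Matrix.one_mul, Matrix.mul_sub, Matrix.mul_one, hPj2, sub_self,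
          sub_zero]
      rw [trace_mul_cycle, hQ2]
    have := trace_re_nonneg' hP'
    rwa [h1] at this
  have hε_le_t : ε ≤ t := by
    have := trace_re_nonneg' hτ
    rw [hτtr_re] at this; linarith
  have hε_le_1 : ε ≤ 1 := hε_le_t.trans hρtr1
  -- square root facts
  set S : Matrix (Fin d) (Fin d) ℂ := CFC.sqrt τ with hSdef
  set R : Matrix (Fin d) (Fin d) ℂ := CFC.sqrt ρ with hRdef
  have hS : S.PosSemidef := Matrix.nonneg_iff_posSemidef.mp (CFC.sqrt_nonneg τ)
  have hSS : S * S = τ := CFC.sqrt_mul_sqrt_self τ hτ.nonneg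
  have hRR : R * R = ρ := CFC.sqrt_mul_sqrt_self ρ hρ.nonneg
  -- support: S * Pj = S
  have hSP : S * Pj = S := by
    have hτP : τ * (1 - Pj) = 0 := by
      simp only [hτdef, Matrix.mul_sub, Matrix.mul_one, Matrix.mul_assoc, hPj2, sub_self]
    have hzero : (S * (1 - Pj))ᴴ * (S * (1 - Pj)) = 0 := by
      rw [conjTranspose_mul, conjTranspose_sub, conjTranspose_one, hPj.eq, hS.1.eq,
        Matrix.mul_assoc, ← Matrix.mul_assoc S, hSS, hτP, Matrix.mul_zero]
    have h2 := conjTranspose_mul_self_eq_zero.mp hzero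
    rw [Matrix.mul_sub, Matrix.mul_one, sub_eq_zero] at h2
    exact h2.symm
  have hPS : Pj * S = S := by
    have := congrArg conjTranspose hSP
    rwa [conjTranspose_mul, hPj.eq, hS.1.eq] at this
  -- the absolute value computation
  set X : Matrix (Fin d) (Fin d) ℂ := R * S with hXdef
  have hXX : Xᴴ * X = τ ^ 2 := by
    rw [hXdef, conjTranspose_mul, hS.1.eq, (Matrix.nonneg_iff_posSemidef.mp (CFC.sqrt_nonneg ρ)).1.eq]
    calc S * R * (R * S) = S * (R * R) * S := by noncomm_ring
    _ = (S * Pj) * ρ * (Pj * S) := by rw [hRR, hSP, hPS]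
    _ = S * (Pj * ρ * Pj) * S := by noncomm_ring
    _ = S * (S * S) * S := by rw [← hτdef, ← hSS]
    _ = τ ^ 2 := by rw [← hSS]; noncomm_ring
  have habs : matAbs X = τ := by
    rw [matAbs_eq_matSqrt, matSqrt_eq_sqrt (posSemidef_conjTranspose_mul_self X), hXX]
    exact CFC.sqrt_sq τ hτ.nonneg
  -- trace norm value
  have htn : traceNorm (matSqrt ρ * matSqrt τ) = t - ε := by
    rw [matSqrt_eq_sqrt hρ, matSqrt_eq_sqrt hτ, traceNorm, ← hRdef, ← hSdef, ← hXdef, habs,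
      hτtr_re]
  -- fidelity bound
  have hF : (1 : ℝ) - ε ≤ genFid ρ τ := by
    rw [genFid, htn, hτtr_re, ← htdef]
    have h1t : (0:ℝ) ≤ 1 - t := by linarith
    have hsq : (1 - t) ≤ Real.sqrt ((1 - t) * (1 - (t - ε))) := by
      have : (1 - t) * (1 - t) ≤ (1 - t) * (1 - (t - ε)) := by nlinarith
      have h := Real.sqrt_le_sqrt this
      rwa [Real.sqrt_mul_self h1t] at h
    linarith
  have hF0 : 0 ≤ genFid ρ τ := by
    rw [genFid, htn]
    have := Real.sqrt_nonneg ((1 - ρ.trace.re) * (1 - τ.trace.re))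
    linarith
  -- conclude
  rw [purifiedDist]
  apply Real.sqrt_le_sqrt
  have h2 : (1 - ε) ^ 2 ≤ genFid ρ τ ^ 2 := by
    apply pow_le_pow_left₀ (by linarith) hF
  nlinarith

end
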